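/- arXiv:2010.13687 — 8 statements merged into one kernel-verified Lean document; each statement's English description precedes it below -/
import Mathlib

section
/- (Theorem 1, first result: exact unbiasedness of the JINI estimator under linear finite-sample bias.) Let p ≥ 1, E := EuclideanSpace ℝ (Fin p), (Ω, 𝔉, P) a probability space with P a probability measure, and θ₀ ∈ E. For each n ∈ ℕ let B n : E →L[ℝ] E be a continuous linear map, c n ∈ E, and let π̂ n, θ̂ n, W n : Ω → E be integrable random vectors such that: (i) ∫ π̂ n dP = θ₀ + B n θ₀ + c n; (ii) ∫ W n dP = 0; (iii) P-almost surely, π̂ n = θ̂ n + B n (θ̂ n) + c n + W n. Suppose there exist C > 0 and β > 0 with ‖B n‖ ≤ C * (n : ℝ)^(-β) (operator norm) for all n ≥ 1. Then there exists N : ℕ such that for all n ≥ N, ∫ θ̂ n dP = θ₀, i.e. the estimator θ̂ n is exactly unbiased for all sufficiently large (but finite) n. -/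
open MeasureTheory Filter

/-- Theorem 1, first result: the JINI estimator is exactly unbiased for all
sufficiently large (but finite) `n` when the finite-sample bias is linear,
`b(θ, n) = B n θ + c n` with `‖B n‖ = O(n^{-β})`. -/
theorem jini_unbiased_linear_bias
    (p : ℕ) (hp : 1 ≤ p) {Ω : Type*} [MeasurableSpace Ω]
    (P : Measure Ω) [IsProbabilityMeasure P]
    (θ₀ : EuclideanSpace ℝ (Fin p))
    (B : ℕ → EuclideanSpace ℝ (Fin p) →L[ℝ] EuclideanSpace ℝ (Fin p))
    (c : ℕ → EuclideanSpace ℝ (Fin p))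
    (πhat θhat W : ℕ → Ω → EuclideanSpace ℝ (Fin p))
    (hπint : ∀ n, Integrable (πhat n) P)
    (hθint : ∀ n, Integrable (θhat n) P)
    (hWint : ∀ n, Integrable (W n) P)
    (hπmean : ∀ n, ∫ ω, πhat n ω ∂P = θ₀ + B n θ₀ + c n)
    (hWmean : ∀ n, ∫ ω, W n ω ∂P = 0)
    (hfix : ∀ n, ∀ᵐ ω ∂P, πhat n ω = θhat n ω + B n (θhat n ω) + c n + W n ω)
    (C β : ℝ) (hC : 0 < C) (hβ : 0 < β)
    (hB : ∀ n : ℕ, 1 ≤ n → ‖B n‖ ≤ C * (n : ℝ) ^ (-β)) :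
    ∃ N : ℕ, ∀ n : ℕ, N ≤ n → ∫ ω, θhat n ω ∂P = θ₀ := by
  -- eventually C * n^(-β) < 1
  have htend : Tendsto (fun n : ℕ => C * (n : ℝ) ^ (-β)) atTop (nhds 0) := by
    have : Tendsto (fun n : ℕ => ((n : ℝ)) ^ (-β)) atTop (nhds 0) := by
      have := (tendsto_rpow_neg_atTop hβ).comp tendsto_natCast_atTop_atTop (α := ℕ)
      exact this
    simpa using this.const_mul C
  have hev : ∀ᶠ n : ℕ in atTop, C * (n : ℝ) ^ (-β) < 1 :=
    (htend.eventually (eventually_lt_nhds zero_lt_one) : _)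
  obtain ⟨N₀, hN₀⟩ := eventually_atTop.1 hev
  refine ⟨max N₀ 1, fun n hn => ?_⟩
  have hn1 : 1 ≤ n := le_trans (le_max_right _ _) hn
  have hBn : ‖B n‖ < 1 := lt_of_le_of_lt (hB n hn1) (hN₀ n (le_trans (le_max_left _ _) hn))
  set S := ∫ ω, θhat n ω ∂P with hS
  -- compute ∫ πhat via hfix
  have hBθint : Integrable (fun ω => B n (θhat n ω)) P :=
    (B n).integrable_comp (hθint n)
  have hcint : Integrable (fun _ : Ω => c n) P := integrable_const _
  have heq : ∫ ω, πhat n ω ∂P = S + B n S + c n := by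
    rw [integral_congr_ae (hfix n)]
    rw [integral_add (by exact ((hθint n).add hBθint).add hcint) (hWint n),
        integral_add (by exact (hθint n).add hBθint) hcint,
        integral_add (hθint n) hBθint, hWmean n,
        (B n).integral_comp_comm (hθint n)]
    simp [hS]
  rw [hπmean n] at heq
  -- θ₀ + B θ₀ = S + B S
  have key : θ₀ + B n θ₀ = S + B n S := add_right_cancel heq
  -- injectivity
  have hdiff : S - θ₀ = B n (θ₀ - S) := by
    have : S - θ₀ = B n θ₀ - B n S := by
      have := key
      linear_combination (norm := module) (-1 : ℝ) • this
    simpa [map_sub] using this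
  by_contra hne
  have hpos : 0 < ‖S - θ₀‖ := by
    simp [norm_pos_iff, sub_ne_zero]
    exact fun h => hne h
  have : ‖S - θ₀‖ ≤ ‖B n‖ * ‖S - θ₀‖ := by
    calc ‖S - θ₀‖ = ‖B n (θ₀ - S)‖ := by rw [hdiff]
    _ ≤ ‖B n‖ * ‖θ₀ - S‖ := (B n).le_opNorm _
    _ = ‖B n‖ * ‖S - θ₀‖ := by rw [norm_sub_rev]
  nlinarith
end

section
/- (Theorem 1, third result.) Let p ≥ 1, E := EuclideanSpace ℝ (Fin p), (Ω, 𝔉, P) a probability space with P a probability measure, Θ ⊆ E and θ₀ ∈ Θ. For each n ∈ ℕ let b n : E → E be given by b n θ = B n θ + c n + r n θ, where B n : E →L[ℝ] E, c n ∈ E, and r n : E → E. Suppose there exist constants C₁ > 0, β₁ > 0, R > 0, β₃ > 0 such that for all n ≥ 1: ‖B n‖ ≤ C₁ * (n : ℝ)^(-β₁) (operator norm) and ‖r n θ‖ ≤ R * (n : ℝ)^(-β₃) for every θ ∈ Θ. For each n let θ̂ n : Ω → E be an integrable random vector with θ̂ n ∈ Θ almost surely, such that b n ∘ θ̂ n is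 integrable and the expectation identity ∫ θ̂ n dP - θ₀ = b n θ₀ - ∫ b n (θ̂ n ω) dP(ω) holds. Then there exist K > 0 and N : ℕ such that for all n ≥ N, ‖∫ θ̂ n dP - θ₀‖ ≤ K * (n : ℝ)^(-β₃). -/
open MeasureTheory

/-- Theorem 1, third result: under Assumption C.3 (linear part plus a remainder
of uniform order `n^{-β₃}` on `Θ`), the JINI estimator has bias of order
`O(n^{-β₃})`. -/
theorem jini_bias_order_C3
    (p : ℕ) (hp : 1 ≤ p) {Ω : Type*} [MeasurableSpace Ω]
    (P : Measure Ω) [IsProbabilityMeasure P]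
    (Θ : Set (EuclideanSpace ℝ (Fin p)))
    (θ₀ : EuclideanSpace ℝ (Fin p)) (hθ₀ : θ₀ ∈ Θ)
    (b : ℕ → EuclideanSpace ℝ (Fin p) → EuclideanSpace ℝ (Fin p))
    (B : ℕ → EuclideanSpace ℝ (Fin p) →L[ℝ] EuclideanSpace ℝ (Fin p))
    (c : ℕ → EuclideanSpace ℝ (Fin p))
    (r : ℕ → EuclideanSpace ℝ (Fin p) → EuclideanSpace ℝ (Fin p))
    (hbdef : ∀ n θ, b n θ = B n θ + c n + r n θ)
    (C₁ β₁ R β₃ : ℝ) (hC₁ : 0 < C₁) (hβ₁ : 0 < β₁) (hR : 0 < R) (hβ₃ : 0 < β₃)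
    (hBnorm : ∀ n : ℕ, 1 ≤ n → ‖B n‖ ≤ C₁ * (n : ℝ) ^ (-β₁))
    (hrnorm : ∀ n : ℕ, 1 ≤ n → ∀ θ ∈ Θ, ‖r n θ‖ ≤ R * (n : ℝ) ^ (-β₃))
    (θhat : ℕ → Ω → EuclideanSpace ℝ (Fin p))
    (hθint : ∀ n, Integrable (θhat n) P)
    (hθΘ : ∀ n, ∀ᵐ ω ∂P, θhat n ω ∈ Θ)
    (hbint : ∀ n, Integrable (fun ω => b n (θhat n ω)) P)
    (hid : ∀ n, (∫ ω, θhat n ω ∂P) - θ₀ = b n θ₀ - ∫ ω, b n (θhat n ω) ∂P) :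
    ∃ K : ℝ, 0 < K ∧ ∃ N : ℕ, ∀ n : ℕ, N ≤ n →
      ‖(∫ ω, θhat n ω ∂P) - θ₀‖ ≤ K * (n : ℝ) ^ (-β₃) := by
  -- pick N such that for n ≥ N, C₁ * n^{-β₁} ≤ 1/2 and n ≥ 1
  have htend : Filter.Tendsto (fun n : ℕ => C₁ * (n : ℝ) ^ (-β₁)) Filter.atTop (nhds 0) := by
    have h1 : Filter.Tendsto (fun x : ℝ => x ^ (-β₁)) Filter.atTop (nhds 0) :=
      tendsto_rpow_neg_atTop hβ₁
    have h2 : Filter.Tendsto (fun n : ℕ => ((n : ℝ)) ^ (-β₁)) Filter.atTop (nhds 0) :=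
      h1.comp tendsto_natCast_atTop_atTop
    simpa using h2.const_mul C₁
  have hev : ∀ᶠ n : ℕ in Filter.atTop, C₁ * (n : ℝ) ^ (-β₁) ≤ 1/2 := by
    have := htend.eventually_le_const (show (0:ℝ) < 1/2 by norm_num)
    exact this
  obtain ⟨N₀, hN₀⟩ := hev.exists_forall_of_atTop
  refine ⟨4 * R, by linarith, max N₀ 1, fun n hn => ?_⟩
  have hn1 : 1 ≤ n := le_trans (le_max_right _ _) hn
  have hnN₀ : N₀ ≤ n := le_trans (le_max_left _ _) hn
  have hB : ‖B n‖ ≤ 1/2 := le_trans (hBnorm n hn1) (hN₀ n hnN₀)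
  -- integrability pieces
  have hBint : Integrable (fun ω => B n (θhat n ω)) P := (B n).integrable_comp (hθint n)
  have hcint : Integrable (fun _ : Ω => c n) P := integrable_const _
  have hrint : Integrable (fun ω => r n (θhat n ω)) P := by
    have : (fun ω => r n (θhat n ω)) =
        fun ω => b n (θhat n ω) - B n (θhat n ω) - c n := by
      funext ω; rw [hbdef]; abel
    rw [this]
    exact ((hbint n).sub hBint).sub hcint
  -- integral of b ∘ θhat
  have hint_b : (∫ ω, b n (θhat n ω) ∂P) =
      B n (∫ ω, θhat n ω ∂P) + c n + ∫ ω, r n (θhat n ω) ∂P := by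
    have h1 : (∫ ω, b n (θhat n ω) ∂P) =
        ∫ ω, (B n (θhat n ω) + c n + r n (θhat n ω)) ∂P := by
      congr 1; funext ω; exact hbdef n (θhat n ω)
    have hBcint : Integrable (fun ω => B n (θhat n ω) + c n) P := hBint.add hcint
    rw [h1, integral_add hBcint hrint, integral_add hBint hcint,
      integral_const, probReal_univ, one_smul,
      (B n).integral_comp_comm (hθint n)]
  set Δ := (∫ ω, θhat n ω ∂P) - θ₀ with hΔ
  have key : Δ + B n Δ = r n θ₀ - ∫ ω, r n (θhat n ω) ∂P := by
    have h := hid n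
    rw [hint_b, hbdef n θ₀] at h
    calc Δ + B n Δ
        = ((∫ ω, θhat n ω ∂P) - θ₀) + (B n (∫ ω, θhat n ω ∂P) - B n θ₀) := by
          rw [hΔ, map_sub]
      _ = r n θ₀ - ∫ ω, r n (θhat n ω) ∂P := by rw [h]; abel
  -- norm bounds
  have hrθ₀ : ‖r n θ₀‖ ≤ R * (n : ℝ) ^ (-β₃) := hrnorm n hn1 θ₀ hθ₀
  have hrint_norm : ‖∫ ω, r n (θhat n ω) ∂P‖ ≤ R * (n : ℝ) ^ (-β₃) := by
    have hae : ∀ᵐ ω ∂P, ‖r n (θhat n ω)‖ ≤ R * (n : ℝ) ^ (-β₃) := by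
      filter_upwards [hθΘ n] with ω hω
      exact hrnorm n hn1 _ hω
    simpa [measure_univ] using norm_integral_le_of_norm_le_const hae
  have hBΔ : ‖B n Δ‖ ≤ (1/2) * ‖Δ‖ := by
    calc ‖B n Δ‖ ≤ ‖B n‖ * ‖Δ‖ := (B n).le_opNorm Δ
      _ ≤ (1/2) * ‖Δ‖ := by
          exact mul_le_mul_of_nonneg_right hB (norm_nonneg _)
  have hbound : ‖Δ‖ ≤ (1/2) * ‖Δ‖ + 2 * (R * (n : ℝ) ^ (-β₃)) := by
    calc ‖Δ‖ = ‖(Δ + B n Δ) - B n Δ‖ := by rw [add_sub_cancel_right]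
      _ ≤ ‖Δ + B n Δ‖ + ‖B n Δ‖ := norm_sub_le _ _
      _ = ‖r n θ₀ - ∫ ω, r n (θhat n ω) ∂P‖ + ‖B n Δ‖ := by rw [key]
      _ ≤ (‖r n θ₀‖ + ‖∫ ω, r n (θhat n ω) ∂P‖) + ‖B n Δ‖ :=
          add_le_add (norm_sub_le _ _) le_rfl
      _ ≤ (1/2) * ‖Δ‖ + 2 * (R * (n : ℝ) ^ (-β₃)) := by linarith
  linarith
end

section
/- (Theorem 1, fourth result.) Let p ≥ 1, E := EuclideanSpace ℝ (Fin p), (Ω, 𝔉, P) a probability space with P a probability measure, Θ ⊆ E and θ₀ ∈ Θ. Let C, D ≥ 0 and α, β > 0. For each n ≥ 1 let b n : E → E satisfy ‖b n θ - b n θ'‖ ≤ C * (n : ℝ)^(-β) * ‖θ - θ'‖ for all θ, θ' ∈ Θ, and let θ̂ n : Ω → E be an integrable random vector with θ̂ n ∈ Θ almost surely such that b n ∘ θ̂ n is integrable, ∫ ‖θ̂ n - θ₀‖ dP ≤ D * (n : ℝ)^(-α), and the expectation identity ∫ θ̂ n dP - θ₀ = b n θ₀ - ∫ b n (θ̂ n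 ω) dP(ω) holds. Then for all n ≥ 1, ‖∫ θ̂ n dP - θ₀‖ ≤ C * D * (n : ℝ)^(-(α + β)). -/
open MeasureTheory

/-- Theorem 1, fourth result: under the Lipschitz bias bound of Assumption C and
the first-moment bound of Assumption B, the JINI estimator has bias bounded by
`C * D * n^{-(α+β)}`. -/
theorem jini_bias_order_C
    (p : ℕ) (hp : 1 ≤ p) {Ω : Type*} [MeasurableSpace Ω]
    (P : Measure Ω) [IsProbabilityMeasure P]
    (Θ : Set (EuclideanSpace ℝ (Fin p)))
    (θ₀ : EuclideanSpace ℝ (Fin p)) (hθ₀ : θ₀ ∈ Θ)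
    (C D α β : ℝ) (hC : 0 ≤ C) (hD : 0 ≤ D) (hα : 0 < α) (hβ : 0 < β)
    (b : ℕ → EuclideanSpace ℝ (Fin p) → EuclideanSpace ℝ (Fin p))
    (hb : ∀ n : ℕ, 1 ≤ n → ∀ θ ∈ Θ, ∀ θ' ∈ Θ,
      ‖b n θ - b n θ'‖ ≤ C * (n : ℝ) ^ (-β) * ‖θ - θ'‖)
    (θhat : ℕ → Ω → EuclideanSpace ℝ (Fin p))
    (hθint : ∀ n, Integrable (θhat n) P)
    (hθΘ : ∀ n, ∀ᵐ ω ∂P, θhat n ω ∈ Θ)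
    (hbint : ∀ n, Integrable (fun ω => b n (θhat n ω)) P)
    (hmom : ∀ n : ℕ, 1 ≤ n → ∫ ω, ‖θhat n ω - θ₀‖ ∂P ≤ D * (n : ℝ) ^ (-α))
    (hid : ∀ n, (∫ ω, θhat n ω ∂P) - θ₀ = b n θ₀ - ∫ ω, b n (θhat n ω) ∂P) :
    ∀ n : ℕ, 1 ≤ n →
      ‖(∫ ω, θhat n ω ∂P) - θ₀‖ ≤ C * D * (n : ℝ) ^ (-(α + β)) := by
  intro n hn
  have hn0 : (0:ℝ) < n := by exact_mod_cast hn
  rw [hid n]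
  have h1 : b n θ₀ - ∫ ω, b n (θhat n ω) ∂P
      = ∫ ω, (b n θ₀ - b n (θhat n ω)) ∂P := by
    rw [integral_sub (integrable_const _) (hbint n), integral_const, probReal_univ,
      one_smul]
  rw [h1]
  have h2 : ‖∫ ω, (b n θ₀ - b n (θhat n ω)) ∂P‖
      ≤ ∫ ω, C * (n:ℝ)^(-β) * ‖θhat n ω - θ₀‖ ∂P := by
    refine norm_integral_le_of_norm_le (((hθint n).sub (integrable_const θ₀)).norm.const_mul _) ?_
    filter_upwards [hθΘ n] with ω hω
    calc ‖b n θ₀ - b n (θhat n ω)‖ ≤ C * (n:ℝ)^(-β) * ‖θ₀ - θhat n ω‖ :=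
          hb n hn θ₀ hθ₀ _ hω
      _ = C * (n:ℝ)^(-β) * ‖θhat n ω - θ₀‖ := by rw [norm_sub_rev]
  refine h2.trans ?_
  rw [integral_const_mul]
  have hpow : (0:ℝ) ≤ (n:ℝ)^(-β) := Real.rpow_nonneg hn0.le _
  calc C * (n:ℝ)^(-β) * ∫ ω, ‖θhat n ω - θ₀‖ ∂P
      ≤ C * (n:ℝ)^(-β) * (D * (n:ℝ)^(-α)) := by
        apply mul_le_mul_of_nonneg_left (hmom n hn) (mul_nonneg hC hpow)
    _ = C * D * (n:ℝ)^(-(α+β)) := by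
        rw [neg_add, Real.rpow_add hn0]; ring
end

section
/- (Proposition 1, first result: bias of the bootstrap bias corrected estimator under linear finite-sample bias.) Let p ≥ 1, E := EuclideanSpace ℝ (Fin p), (Ω, 𝔉, P) a probability space with P a probability measure, and θ₀ ∈ E. For each n ∈ ℕ let B n : E →L[ℝ] E, c n ∈ E, and let π̂ n, θ̃ n, W n : Ω → E be integrable random vectors such that: (i) ∫ π̂ n dP = θ₀ + B n θ₀ + c n; (ii) ∫ W n dP = 0; (iii) P-almost surely, θ̃ n = 2 • π̂ n - (π̂ n + B n (π̂ n) + c n + W n). Suppose there exist C₁ > 0, β₁ > 0, C₂ > 0, β > 0 such that for all n ≥ 1, ‖B n‖ ≤ C₁ * (n : ℝ)^(-β₁) (operator norm) and ‖B n θ₀ + c n‖ ≤ C₂ * (n : ℝ)^(-β). Then for all n ≥ 1, ‖∫ θ̃ n dP - θ₀‖ ≤ C₁ * C₂ * (n : ℝ)^(-(β + β₁)). -/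
open MeasureTheory

/-- Proposition 1, first result: bias of the bootstrap bias corrected (BBC)
estimator under linear finite-sample bias `b(θ, n) = B n θ + c n`. -/
theorem bbc_bias_linear
    (p : ℕ) (hp : 1 ≤ p) {Ω : Type*} [MeasurableSpace Ω]
    (P : Measure Ω) [IsProbabilityMeasure P]
    (θ₀ : EuclideanSpace ℝ (Fin p))
    (B : ℕ → EuclideanSpace ℝ (Fin p) →L[ℝ] EuclideanSpace ℝ (Fin p))
    (c : ℕ → EuclideanSpace ℝ (Fin p))
    (πhat θtilde W : ℕ → Ω → EuclideanSpace ℝ (Fin p))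
    (hπint : ∀ n, Integrable (πhat n) P)
    (hθint : ∀ n, Integrable (θtilde n) P)
    (hWint : ∀ n, Integrable (W n) P)
    (hπmean : ∀ n, ∫ ω, πhat n ω ∂P = θ₀ + B n θ₀ + c n)
    (hWmean : ∀ n, ∫ ω, W n ω ∂P = 0)
    (hBBC : ∀ n, ∀ᵐ ω ∂P, θtilde n ω =
      (2 : ℝ) • πhat n ω - (πhat n ω + B n (πhat n ω) + c n + W n ω))
    (C₁ β₁ C₂ β : ℝ) (hC₁ : 0 < C₁) (hβ₁ : 0 < β₁) (hC₂ : 0 < C₂) (hβ : 0 < β)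
    (hBnorm : ∀ n : ℕ, 1 ≤ n → ‖B n‖ ≤ C₁ * (n : ℝ) ^ (-β₁))
    (hbnorm : ∀ n : ℕ, 1 ≤ n → ‖B n θ₀ + c n‖ ≤ C₂ * (n : ℝ) ^ (-β)) :
    ∀ n : ℕ, 1 ≤ n →
      ‖(∫ ω, θtilde n ω ∂P) - θ₀‖ ≤ C₁ * C₂ * (n : ℝ) ^ (-(β + β₁)) := by
  intro n hn
  have hn' : (0:ℝ) < n := by exact_mod_cast hn
  have hBπ : Integrable (fun ω => B n (πhat n ω)) P := (B n).integrable_comp (hπint n)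
  have hc : Integrable (fun _ : Ω => c n) P := integrable_const _
  have h1 : ∫ ω, θtilde n ω ∂P =
      (2:ℝ) • (∫ ω, πhat n ω ∂P) -
        ((∫ ω, πhat n ω ∂P) + B n (∫ ω, πhat n ω ∂P) + c n + ∫ ω, W n ω ∂P) := by
    have hA : Integrable (fun ω => (2:ℝ) • πhat n ω) P := (hπint n).smul (2:ℝ)
    have h2 : Integrable (fun ω => πhat n ω + B n (πhat n ω)) P := (hπint n).add hBπ
    have h3 : Integrable (fun ω => πhat n ω + B n (πhat n ω) + c n) P := h2.add hc
    have h4 : Integrable (fun ω => πhat n ω + B n (πhat n ω) + c n + W n ω) P :=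
      h3.add (hWint n)
    rw [integral_congr_ae (hBBC n), integral_sub hA h4, integral_smul,
      integral_add h3 (hWint n), integral_add h2 hc, integral_add (hπint n) hBπ,
      integral_const, ContinuousLinearMap.integral_comp_comm _ (hπint n)]
    simp
  rw [h1, hπmean n, hWmean n]
  have heq : (2:ℝ) • (θ₀ + B n θ₀ + c n) -
      ((θ₀ + B n θ₀ + c n) + B n (θ₀ + B n θ₀ + c n) + c n + 0) - θ₀
      = -(B n (B n θ₀ + c n)) := by
    simp only [map_add, two_smul, add_zero]
    abel
  rw [heq, norm_neg]
  calc ‖B n (B n θ₀ + c n)‖ ≤ ‖B n‖ * ‖B n θ₀ + c n‖ := (B n).le_opNorm _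
    _ ≤ (C₁ * (n:ℝ) ^ (-β₁)) * (C₂ * (n:ℝ) ^ (-β)) :=
        mul_le_mul (hBnorm n hn) (hbnorm n hn) (norm_nonneg _) (by positivity)
    _ = C₁ * C₂ * (n:ℝ) ^ (-(β + β₁)) := by
        rw [neg_add, Real.rpow_add hn']; ring
end

section
/- (Proposition 1, third result.) Let p ≥ 1, E := EuclideanSpace ℝ (Fin p), (Ω, 𝔉, P) a probability space with P a probability measure, Θ ⊆ E and θ₀ ∈ Θ. For each n ∈ ℕ let b n : E → E be given by b n θ = B n θ + c n + r n θ with B n : E →L[ℝ] E, c n ∈ E and r n : E → E, and suppose there exist C₁ > 0, β₁ > 0, C₂ > 0, β > 0, R > 0, β₃ > 0 such that for all n ≥ 1: ‖B n‖ ≤ C₁ * (n : ℝ)^(-β₁), ‖b n θ₀‖ ≤ C₂ * (n : ℝ)^(-β), and ‖r n θ‖ ≤ R * (n : ℝ)^(-β₃) for every θ ∈ Θ. For each n let π̂ n, θ̃ n : Ω → E be integrable random vectors with π̂ n ∈ Θ almost surely, such that b n ∘ π̂ n is integrable, ∫ π̂ n dP = θ₀ + b n θ₀, and ∫ θ̃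 n dP - θ₀ = b n θ₀ - ∫ b n (π̂ n ω) dP(ω). Then for all n ≥ 1, ‖∫ θ̃ n dP - θ₀‖ ≤ (C₁ * C₂ + 2 * R) * (n : ℝ)^(-min (β + β₁) β₃). -/
open MeasureTheory

/-- Proposition 1, third result: bias of the bootstrap bias corrected (BBC)
estimator under Assumption C.3. -/
theorem bbc_bias_order_C3
    (p : ℕ) (hp : 1 ≤ p) {Ω : Type*} [MeasurableSpace Ω]
    (P : Measure Ω) [IsProbabilityMeasure P]
    (Θ : Set (EuclideanSpace ℝ (Fin p)))
    (θ₀ : EuclideanSpace ℝ (Fin p)) (hθ₀ : θ₀ ∈ Θ)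
    (b : ℕ → EuclideanSpace ℝ (Fin p) → EuclideanSpace ℝ (Fin p))
    (B : ℕ → EuclideanSpace ℝ (Fin p) →L[ℝ] EuclideanSpace ℝ (Fin p))
    (c : ℕ → EuclideanSpace ℝ (Fin p))
    (r : ℕ → EuclideanSpace ℝ (Fin p) → EuclideanSpace ℝ (Fin p))
    (hbdef : ∀ n θ, b n θ = B n θ + c n + r n θ)
    (C₁ β₁ C₂ β R β₃ : ℝ) (hC₁ : 0 < C₁) (hβ₁ : 0 < β₁) (hC₂ : 0 < C₂)
    (hβ : 0 < β) (hR : 0 < R) (hβ₃ : 0 < β₃)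
    (hBnorm : ∀ n : ℕ, 1 ≤ n → ‖B n‖ ≤ C₁ * (n : ℝ) ^ (-β₁))
    (hbnorm : ∀ n : ℕ, 1 ≤ n → ‖b n θ₀‖ ≤ C₂ * (n : ℝ) ^ (-β))
    (hrnorm : ∀ n : ℕ, 1 ≤ n → ∀ θ ∈ Θ, ‖r n θ‖ ≤ R * (n : ℝ) ^ (-β₃))
    (πhat θtilde : ℕ → Ω → EuclideanSpace ℝ (Fin p))
    (hπint : ∀ n, Integrable (πhat n) P)
    (hθint : ∀ n, Integrable (θtilde n) P)
    (hπΘ : ∀ n, ∀ᵐ ω ∂P, πhat n ω ∈ Θ)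
    (hbint : ∀ n, Integrable (fun ω => b n (πhat n ω)) P)
    (hπmean : ∀ n, ∫ ω, πhat n ω ∂P = θ₀ + b n θ₀)
    (hid : ∀ n, (∫ ω, θtilde n ω ∂P) - θ₀ = b n θ₀ - ∫ ω, b n (πhat n ω) ∂P) :
    ∀ n : ℕ, 1 ≤ n →
      ‖(∫ ω, θtilde n ω ∂P) - θ₀‖ ≤
        (C₁ * C₂ + 2 * R) * (n : ℝ) ^ (-(min (β + β₁) β₃)) := by

  intro n hn
  have hn1 : (1:ℝ) ≤ (n:ℝ) := by exact_mod_cast hn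
  have hnpos : (0:ℝ) < (n:ℝ) := lt_of_lt_of_le one_pos hn1
  -- integrability of pieces
  have hBint : Integrable (fun ω => B n (πhat n ω)) P :=
    (B n).integrable_comp (hπint n)
  have hrint : Integrable (fun ω => r n (πhat n ω)) P := by
    have : (fun ω => r n (πhat n ω)) =
        fun ω => b n (πhat n ω) - B n (πhat n ω) - c n := by
      funext ω; rw [hbdef n (πhat n ω)]; abel
    rw [this]
    exact ((hbint n).sub hBint).sub (integrable_const _)
  -- compute ∫ b n (πhat n)
  have hsplit : ∫ ω, b n (πhat n ω) ∂P
      = B n (θ₀ + b n θ₀) + c n + ∫ ω, r n (πhat n ω) ∂P := by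
    have : (fun ω => b n (πhat n ω)) =
        fun ω => (B n (πhat n ω) + c n) + r n (πhat n ω) := by
      funext ω; rw [hbdef n (πhat n ω)]
    calc ∫ ω, b n (πhat n ω) ∂P
        = ∫ ω, ((B n (πhat n ω) + c n) + r n (πhat n ω)) ∂P := by
          simp_rw [hbdef]
      _ = (∫ ω, (B n (πhat n ω) + c n) ∂P) + ∫ ω, r n (πhat n ω) ∂P :=
          integral_add (hBint.add (integrable_const (c n))) hrint
      _ = ((∫ ω, B n (πhat n ω) ∂P) + ∫ _ω, c n ∂P) + ∫ ω, r n (πhat n ω) ∂P := by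
          rw [integral_add hBint (integrable_const (c n))]
      _ = B n (θ₀ + b n θ₀) + c n + ∫ ω, r n (πhat n ω) ∂P := by
          rw [integral_const, (B n).integral_comp_comm (hπint n), hπmean n]
          simp
  have key : (∫ ω, θtilde n ω ∂P) - θ₀
      = - B n (b n θ₀) + (r n θ₀ - ∫ ω, r n (πhat n ω) ∂P) := by
    rw [hid n, hsplit, hbdef n θ₀, map_add]
    abel
  rw [key]
  -- bounds
  have h1 : ‖B n (b n θ₀)‖ ≤ C₁ * C₂ * (n:ℝ) ^ (-(β + β₁)) := by
    calc ‖B n (b n θ₀)‖ ≤ ‖B n‖ * ‖b n θ₀‖ := (B n).le_opNorm _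
    _ ≤ (C₁ * (n:ℝ) ^ (-β₁)) * (C₂ * (n:ℝ) ^ (-β)) := by
        apply mul_le_mul (hBnorm n hn) (hbnorm n hn) (norm_nonneg _)
        exact le_trans (norm_nonneg _) (hBnorm n hn)
    _ = C₁ * C₂ * (n:ℝ) ^ (-(β + β₁)) := by
        rw [show -(β + β₁) = -β₁ + -β by ring, Real.rpow_add hnpos]; ring
  have h2 : ‖r n θ₀‖ ≤ R * (n:ℝ) ^ (-β₃) := hrnorm n hn θ₀ hθ₀
  have h3 : ‖∫ ω, r n (πhat n ω) ∂P‖ ≤ R * (n:ℝ) ^ (-β₃) := by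
    have hb : ∀ᵐ ω ∂P, ‖r n (πhat n ω)‖ ≤ R * (n:ℝ) ^ (-β₃) :=
      (hπΘ n).mono fun ω hω => hrnorm n hn _ hω
    calc ‖∫ ω, r n (πhat n ω) ∂P‖ ≤ ∫ ω, ‖r n (πhat n ω)‖ ∂P :=
        norm_integral_le_integral_norm _
    _ ≤ ∫ _ω, R * (n:ℝ) ^ (-β₃) ∂P :=
        integral_mono_ae hrint.norm (integrable_const _) hb
    _ = R * (n:ℝ) ^ (-β₃) := by simp
  -- exponent monotonicity
  have e1 : (n:ℝ) ^ (-(β + β₁)) ≤ (n:ℝ) ^ (-(min (β + β₁) β₃)) :=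
    Real.rpow_le_rpow_of_exponent_le hn1 (neg_le_neg (min_le_left _ _))
  have e2 : (n:ℝ) ^ (-β₃) ≤ (n:ℝ) ^ (-(min (β + β₁) β₃)) :=
    Real.rpow_le_rpow_of_exponent_le hn1 (neg_le_neg (min_le_right _ _))
  calc ‖- B n (b n θ₀) + (r n θ₀ - ∫ ω, r n (πhat n ω) ∂P)‖
      ≤ ‖B n (b n θ₀)‖ + (‖r n θ₀‖ + ‖∫ ω, r n (πhat n ω) ∂P‖) := by
        refine le_trans (norm_add_le _ _) ?_
        rw [norm_neg]
        exact add_le_add (le_refl _) (norm_sub_le (r n θ₀) (∫ ω, r n (πhat n ω) ∂P))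
    _ ≤ C₁ * C₂ * (n:ℝ) ^ (-(β + β₁)) + (R * (n:ℝ) ^ (-β₃) + R * (n:ℝ) ^ (-β₃)) :=
        add_le_add h1 (add_le_add h2 h3)
    _ ≤ C₁ * C₂ * (n:ℝ) ^ (-(min (β + β₁) β₃)) + (R * (n:ℝ) ^ (-(min (β + β₁) β₃)) + R * (n:ℝ) ^ (-(min (β + β₁) β₃))) := by
        gcongr <;> positivity
    _ = (C₁ * C₂ + 2 * R) * (n:ℝ) ^ (-(min (β + β₁) β₃)) := by ring
end

section
/- (Proposition 1, fourth result.) Let p ≥ 1, E := EuclideanSpace ℝ (Fin p), (Ω, 𝔉, P) a probability space with P a probability measure, Θ ⊆ E and θ₀ ∈ Θ. Let C, D ≥ 0 and α, β > 0. For each n ≥ 1 let b n : E → E satisfy ‖b n θ - b n θ'‖ ≤ C * (n : ℝ)^(-β) * ‖θ - θ'‖ for all θ, θ' ∈ Θ, and let π̂ n, θ̃ n : Ω → E be integrable random vectors with π̂ n ∈ Θ almost surely, such that b n ∘ π̂ n is integrable, ∫ ‖π̂ n - θ₀‖ dP ≤ D * (n : ℝ)^(-α), and ∫ θ̃ n dP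 - θ₀ = b n θ₀ - ∫ b n (π̂ n ω) dP(ω). Then for all n ≥ 1, ‖∫ θ̃ n dP - θ₀‖ ≤ C * D * (n : ℝ)^(-(α + β)). -/
open MeasureTheory

/-- Proposition 1, fourth result: bias of the bootstrap bias corrected (BBC)
estimator under the general Assumption C, of order `C * D * n^{-(α+β)}`. -/
theorem bbc_bias_order_C
    (p : ℕ) (hp : 1 ≤ p) {Ω : Type*} [MeasurableSpace Ω]
    (P : Measure Ω) [IsProbabilityMeasure P]
    (Θ : Set (EuclideanSpace ℝ (Fin p)))
    (θ₀ : EuclideanSpace ℝ (Fin p)) (hθ₀ : θ₀ ∈ Θ)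
    (C D α β : ℝ) (hC : 0 ≤ C) (hD : 0 ≤ D) (hα : 0 < α) (hβ : 0 < β)
    (b : ℕ → EuclideanSpace ℝ (Fin p) → EuclideanSpace ℝ (Fin p))
    (hb : ∀ n : ℕ, 1 ≤ n → ∀ θ ∈ Θ, ∀ θ' ∈ Θ,
      ‖b n θ - b n θ'‖ ≤ C * (n : ℝ) ^ (-β) * ‖θ - θ'‖)
    (πhat θtilde : ℕ → Ω → EuclideanSpace ℝ (Fin p))
    (hπint : ∀ n, Integrable (πhat n) P)
    (hθint : ∀ n, Integrable (θtilde n) P)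
    (hπΘ : ∀ n, ∀ᵐ ω ∂P, πhat n ω ∈ Θ)
    (hbint : ∀ n, Integrable (fun ω => b n (πhat n ω)) P)
    (hmom : ∀ n : ℕ, 1 ≤ n → ∫ ω, ‖πhat n ω - θ₀‖ ∂P ≤ D * (n : ℝ) ^ (-α))
    (hid : ∀ n, (∫ ω, θtilde n ω ∂P) - θ₀ = b n θ₀ - ∫ ω, b n (πhat n ω) ∂P) :
    ∀ n : ℕ, 1 ≤ n →
      ‖(∫ ω, θtilde n ω ∂P) - θ₀‖ ≤ C * D * (n : ℝ) ^ (-(α + β)) := by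
  intro n hn
  have hnpos : (0 : ℝ) < (n : ℝ) := by exact_mod_cast hn
  rw [hid n]
  have h1 : b n θ₀ - ∫ ω, b n (πhat n ω) ∂P
      = ∫ ω, (b n θ₀ - b n (πhat n ω)) ∂P := by
    rw [integral_sub (integrable_const _) (hbint n), integral_const, probReal_univ,
      one_smul]
  rw [h1]
  have h2 : ‖∫ ω, (b n θ₀ - b n (πhat n ω)) ∂P‖
      ≤ ∫ ω, C * (n : ℝ) ^ (-β) * ‖θ₀ - πhat n ω‖ ∂P := by
    refine (norm_integral_le_integral_norm _).trans ?_
    refine integral_mono_ae ((integrable_const _).sub (hbint n)).norm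
      (((integrable_const θ₀).sub (hπint n)).norm.const_mul _) ?_
    filter_upwards [hπΘ n] with ω hω
    exact hb n hn θ₀ hθ₀ _ hω
  refine h2.trans ?_
  have h3 : ∫ ω, C * (n : ℝ) ^ (-β) * ‖θ₀ - πhat n ω‖ ∂P
      = C * (n : ℝ) ^ (-β) * ∫ ω, ‖πhat n ω - θ₀‖ ∂P := by
    rw [integral_const_mul]
    congr 1
    exact integral_congr_ae (Filter.Eventually.of_forall fun ω => norm_sub_rev _ _)
  rw [h3]
  have h4 : C * (n : ℝ) ^ (-β) * ∫ ω, ‖πhat n ω - θ₀‖ ∂P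
      ≤ C * (n : ℝ) ^ (-β) * (D * (n : ℝ) ^ (-α)) := by
    refine mul_le_mul_of_nonneg_left (hmom n hn) ?_
    positivity
  refine h4.trans_eq ?_
  rw [show -(α + β) = -α + -β by ring, Real.rpow_add hnpos]
  ring
end

section
/- (Theorem 2, first result: exact unbiasedness of the JINI estimator based on an inconsistent initial estimator when both bias functions are linear.) Let p ≥ 1, E := EuclideanSpace ℝ (Fin p), (Ω, 𝔉, P) a probability space with P a probability measure, and θ₀ ∈ E. Let A : E →L[ℝ] E and z ∈ E, and suppose the map id + A : E →L[ℝ] E has a two-sided continuous linear inverse (i.e. there is M : E →L[ℝ] E with M ∘ (id + A) = id and (id + A) ∘ M = id). For each n ∈ ℕ let B n : E →L[ℝ] E with ‖B n‖ ≤ C * (n : ℝ)^(-β₁) for all n ≥ 1, for some C > 0 and β₁ > 0, let c n ∈ E, and let π̂ n, θ̂ n, W n : Ω → E be integrable random vectors such that: (i) ∫ π̂ n dP = θ₀ + A θ₀ + z + B n θ₀ + c n; (ii) ∫ W n dP = 0; (iii) P-almost surely, π̂ n = θ̂ n + A (θ̂ n) + z + B n (θ̂ n) + c n + W n. Then there exists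 N : ℕ such that for all n ≥ N, ∫ θ̂ n dP = θ₀. -/
open MeasureTheory

/-- Theorem 2, first result: the JINI estimator based on an inconsistent
initial estimator is exactly unbiased for all sufficiently large (but finite)
`n` when both the asymptotic bias `a(θ) = A θ + z` (with `I + A` invertible)
and the finite-sample bias `b(θ, n) = B n θ + c n` are linear. -/
theorem jini_unbiased_inconsistent_linear
    (p : ℕ) (hp : 1 ≤ p) {Ω : Type*} [MeasurableSpace Ω]
    (P : Measure Ω) [IsProbabilityMeasure P]
    (θ₀ : EuclideanSpace ℝ (Fin p))
    (A : EuclideanSpace ℝ (Fin p) →L[ℝ] EuclideanSpace ℝ (Fin p))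
    (z : EuclideanSpace ℝ (Fin p))
    (M : EuclideanSpace ℝ (Fin p) →L[ℝ] EuclideanSpace ℝ (Fin p))
    (hM1 : M.comp (ContinuousLinearMap.id ℝ (EuclideanSpace ℝ (Fin p)) + A) =
      ContinuousLinearMap.id ℝ (EuclideanSpace ℝ (Fin p)))
    (hM2 : (ContinuousLinearMap.id ℝ (EuclideanSpace ℝ (Fin p)) + A).comp M =
      ContinuousLinearMap.id ℝ (EuclideanSpace ℝ (Fin p)))
    (B : ℕ → EuclideanSpace ℝ (Fin p) →L[ℝ] EuclideanSpace ℝ (Fin p))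
    (C β₁ : ℝ) (hC : 0 < C) (hβ₁ : 0 < β₁)
    (hBnorm : ∀ n : ℕ, 1 ≤ n → ‖B n‖ ≤ C * (n : ℝ) ^ (-β₁))
    (c : ℕ → EuclideanSpace ℝ (Fin p))
    (πhat θhat W : ℕ → Ω → EuclideanSpace ℝ (Fin p))
    (hπint : ∀ n, Integrable (πhat n) P)
    (hθint : ∀ n, Integrable (θhat n) P)
    (hWint : ∀ n, Integrable (W n) P)
    (hπmean : ∀ n, ∫ ω, πhat n ω ∂P = θ₀ + A θ₀ + z + B n θ₀ + c n)
    (hWmean : ∀ n, ∫ ω, W n ω ∂P = 0)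
    (hfix : ∀ n, ∀ᵐ ω ∂P, πhat n ω =
      θhat n ω + A (θhat n ω) + z + B n (θhat n ω) + c n + W n ω) :
    ∃ N : ℕ, ∀ n : ℕ, N ≤ n → ∫ ω, θhat n ω ∂P = θ₀ := by
  -- ‖M‖ * C * n ^ (-β₁) → 0, so eventually it is < 1
  have h0 : Filter.Tendsto (fun n : ℕ => ‖M‖ * C * (n : ℝ) ^ (-β₁))
      Filter.atTop (nhds 0) := by
    have h1 := (tendsto_rpow_neg_atTop hβ₁).comp tendsto_natCast_atTop_atTop
    have h2 := h1.const_mul (‖M‖ * C)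
    simpa only [Function.comp_def, mul_zero] using h2
  have hev : ∀ᶠ n : ℕ in Filter.atTop, ‖M‖ * C * (n : ℝ) ^ (-β₁) < 1 :=
    h0.eventually_lt_const one_pos
  have hev2 : ∀ᶠ n : ℕ in Filter.atTop,
      (1 ≤ n ∧ ‖M‖ * C * (n : ℝ) ^ (-β₁) < 1) :=
    (Filter.eventually_ge_atTop 1).and hev
  obtain ⟨N, hN⟩ := Filter.eventually_atTop.mp hev2
  refine ⟨N, fun n hn => ?_⟩
  obtain ⟨hn1, hnlt⟩ := hN n hn
  set μ := ∫ ω, θhat n ω ∂P with hμ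
  -- compute the integral of the fixed-point equation
  have i1 := hθint n
  have i2 : Integrable (fun ω => A (θhat n ω)) P := A.integrable_comp i1
  have i3 : Integrable (fun _ : Ω => z) P := integrable_const z
  have i4 : Integrable (fun ω => (B n) (θhat n ω)) P := (B n).integrable_comp i1
  have i5 : Integrable (fun _ : Ω => c n) P := integrable_const (c n)
  have i6 := hWint n
  have j2 : Integrable (fun ω => θhat n ω + A (θhat n ω)) P := i1.add i2
  have j3 : Integrable (fun ω => θhat n ω + A (θhat n ω) + z) P := j2.add i3
  have j4 : Integrable (fun ω => θhat n ω + A (θhat n ω) + z + B n (θhat n ω)) P :=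
    j3.add i4
  have j5 : Integrable
      (fun ω => θhat n ω + A (θhat n ω) + z + B n (θhat n ω) + c n) P := j4.add i5
  have hint : ∫ ω, πhat n ω ∂P = μ + A μ + z + B n μ + c n := by
    rw [integral_congr_ae (hfix n),
      integral_add j5 i6, integral_add j4 i5, integral_add j3 i4,
      integral_add j2 i3, integral_add i1 i2,
      A.integral_comp_comm i1, (B n).integral_comp_comm i1, hWmean n]
    simp [← hμ]
  have key : μ + A μ + z + B n μ + c n = θ₀ + A θ₀ + z + B n θ₀ + c n := by
    rw [← hint, hπmean n]
  have key2 : μ + A μ + B n μ = θ₀ + A θ₀ + B n θ₀ := by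
    have h : (μ + A μ + B n μ) + (z + c n) = (θ₀ + A θ₀ + B n θ₀) + (z + c n) := by
      calc (μ + A μ + B n μ) + (z + c n) = μ + A μ + z + B n μ + c n := by abel
        _ = θ₀ + A θ₀ + z + B n θ₀ + c n := key
        _ = (θ₀ + A θ₀ + B n θ₀) + (z + c n) := by abel
    exact add_right_cancel h
  set u := μ - θ₀ with hu
  have h3 : u + A u + B n u = 0 := by
    rw [hu, map_sub, map_sub, sub_add_sub_comm, sub_add_sub_comm]
    exact sub_eq_zero.mpr key2
  -- apply M
  have hMapp : ∀ x, M (x + A x) = x := by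
    intro x
    have h := ContinuousLinearMap.ext_iff.mp hM1 x
    simpa using h
  have h4 : u + M (B n u) = 0 := by
    have h := congrArg M h3
    rw [map_zero] at h
    calc u + M (B n u) = M (u + A u) + M (B n u) := by rw [hMapp u]
      _ = M (u + A u + B n u) := (map_add M (u + A u) (B n u)).symm
      _ = 0 := h
  -- invertibility of 1 + M ∘ B n
  set t : EuclideanSpace ℝ (Fin p) →L[ℝ] EuclideanSpace ℝ (Fin p) :=
    -(M.comp (B n)) with ht
  have htnorm : ‖t‖ < 1 := by
    rw [ht, norm_neg]
    calc ‖M.comp (B n)‖ ≤ ‖M‖ * ‖B n‖ := M.opNorm_comp_le (B n)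
      _ ≤ ‖M‖ * (C * (n : ℝ) ^ (-β₁)) := by
          exact mul_le_mul_of_nonneg_left (hBnorm n hn1) (norm_nonneg M)
      _ = ‖M‖ * C * (n : ℝ) ^ (-β₁) := by ring
      _ < 1 := hnlt
  have h5 : (1 - t) u = 0 := by
    have : (1 - t) u = u + M (B n u) := by
      simp [ht, ContinuousLinearMap.sub_apply, ContinuousLinearMap.comp_apply,
        sub_neg_eq_add]
    rw [this, h4]
  have h6 : u = 0 := by
    set U := Units.oneSub t htnorm with hU
    have hmul : (↑U⁻¹ : EuclideanSpace ℝ (Fin p) →L[ℝ] EuclideanSpace ℝ (Fin p))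
        * (1 - t) = 1 := by
      have := U.inv_mul
      simpa [hU, Units.oneSub] using this
    calc u = ((1 : EuclideanSpace ℝ (Fin p) →L[ℝ] EuclideanSpace ℝ (Fin p))) u := rfl
      _ = ((↑U⁻¹ : EuclideanSpace ℝ (Fin p) →L[ℝ] EuclideanSpace ℝ (Fin p))
            * (1 - t)) u := by rw [hmul]
      _ = (↑U⁻¹ : EuclideanSpace ℝ (Fin p) →L[ℝ] EuclideanSpace ℝ (Fin p))
            ((1 - t) u) := rfl
      _ = 0 := by rw [h5, map_zero]
  exact sub_eq_zero.mp h6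
end

section
/- (Corollary 1, exponent comparison: the JINI bias order dominates the BBC bias order.) Let α, β, β₁, β₂, β₃, β₄ be real numbers with 0 < α, α < β, β = min β₁ (min β₂ β₃), and β₃ < β₄. Define γ₂ := max (min (2*α + β₃) (min (2*β₃) β₄)) (α + β), γ₃ := max β₃ (α + β), υ₂ := max (min (β + β₁) (min (β + β₃) (min (2*α + β₃) β₄))) (α + β), and υ₃ := max (min (β + β₁) β₃) (α + β). Then γ₂ ≥ υ₂ and γ₃ ≥ υ₃. -/
/-- Corollary 1 (exponent comparison): the JINI bias exponents dominate the
BBC bias exponents, `γ₂ ≥ υ₂` and `γ₃ ≥ υ₃`. -/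
theorem jini_dominates_bbc_exponents
    (α β β₁ β₂ β₃ β₄ : ℝ) (hα : 0 < α) (hαβ : α < β)
    (hβ : β = min β₁ (min β₂ β₃)) (hβ₃₄ : β₃ < β₄) :
    max (min (2 * α + β₃) (min (2 * β₃) β₄)) (α + β) ≥
      max (min (β + β₁) (min (β + β₃) (min (2 * α + β₃) β₄))) (α + β) ∧
    max β₃ (α + β) ≥ max (min (β + β₁) β₃) (α + β) := by
  have hb3 : β ≤ β₃ := hβ ▸ (min_le_right _ _).trans (min_le_right _ _)
  constructor
  · apply max_le_max _ le_rfl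
    refine le_min ?_ (le_min ?_ ?_)
    · exact (min_le_right _ _).trans <| (min_le_right _ _).trans (min_le_left _ _)
    · exact (min_le_right _ _).trans <| (min_le_left _ _).trans (by linarith)
    · exact (min_le_right _ _).trans <| (min_le_right _ _).trans (min_le_right _ _)
  · exact max_le_max (min_le_right _ _) le_rfl
end
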